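/- Let U ⊆ ℂ be open, ζ₁, ζ₂ holomorphic on U with ζ₂′ ≠ 0 on U, R = ζ₁′/ζ₂′ with Im R > 0 on U, and suppose F(z) = (Re ζ₁(z), Re ζ₂(z)) is a homeomorphism of U onto an open set V ⊆ ℝ² with inverse G; set y₁ = Im ζ₁ ∘ G, y₂ = Im ζ₂ ∘ G. Let ρ : V → ℝ be differentiable with ∂ρ/∂x₁ = −y₂/π and ∂ρ/∂x₂ = y₁/π on V. Then ρ is twice differentiable on V and its Hessian at the point F(z) is the matrix (1/(π Im R(z))) · [[1, −Re R(z)], [−Re R(z), |R(z)|²]]; this matrix is positive definite for every z ∈ U, and hence ρ is strictly convex on V whenever V is convex. -/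

import Mathlib

open Complex ContinuousLinearMap

noncomputable def fmap (A B : ℂ) : ℂ →L[ℝ] ℝ × ℝ :=
  (Complex.reCLM.comp (ContinuousLinearMap.mul ℝ ℂ A)).prod
    (Complex.reCLM.comp (ContinuousLinearMap.mul ℝ ℂ B))

@[simp] lemma fmap_apply (A B w : ℂ) : fmap A B w = ((A*w).re, (B*w).re) := rfl

noncomputable def gmap (A B : ℂ) : ℝ × ℝ →L[ℝ] ℂ :=
  Complex.equivRealProdCLM.symm.toContinuousLinearMap.comp
    ((((-B.im / (A.im*B.re - A.re*B.im)) • ContinuousLinearMap.fst ℝ ℝ ℝ +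
       (A.im / (A.im*B.re - A.re*B.im)) • ContinuousLinearMap.snd ℝ ℝ ℝ).prod
     ((-B.re / (A.im*B.re - A.re*B.im)) • ContinuousLinearMap.fst ℝ ℝ ℝ +
       (A.re / (A.im*B.re - A.re*B.im)) • ContinuousLinearMap.snd ℝ ℝ ℝ)))

@[simp] lemma gmap_re (A B : ℂ) (p : ℝ × ℝ) :
    (gmap A B p).re = -B.im / (A.im*B.re - A.re*B.im) * p.1 + A.im / (A.im*B.re - A.re*B.im) * p.2 := by
  simp [gmap]

@[simp] lemma gmap_im (A B : ℂ) (p : ℝ × ℝ) :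
    (gmap A B p).im = -B.re / (A.im*B.re - A.re*B.im) * p.1 + A.re / (A.im*B.re - A.re*B.im) * p.2 := by
  simp [gmap]

noncomputable def fequiv (A B : ℂ) (hd : A.im*B.re - A.re*B.im ≠ 0) : ℂ ≃L[ℝ] ℝ × ℝ :=
  ContinuousLinearEquiv.equivOfInverse (fmap A B) (gmap A B)
    (fun w => by
      apply Complex.ext <;> simp [Complex.mul_re] <;> field_simp <;> ring_nf <;> field_simp [show B.re * A.im - A.re * B.im ≠ 0 by contrapose! hd; linarith, show -(B.im * A.re) + A.im * B.re ≠ 0 by contrapose! hd; linarith])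
    (fun p => by
      apply Prod.ext <;> simp [Complex.mul_re] <;> field_simp <;> ring_nf <;> field_simp [show B.re * A.im - B.im * A.re ≠ 0 by contrapose! hd; linarith])

lemma fequiv_coe (A B : ℂ) (hd : A.im*B.re - A.re*B.im ≠ 0) :
    (fequiv A B hd : ℂ →L[ℝ] ℝ × ℝ) = fmap A B := rfl

lemma fequiv_symm_coe (A B : ℂ) (hd : A.im*B.re - A.re*B.im ≠ 0) :
    ((fequiv A B hd).symm : ℝ × ℝ →L[ℝ] ℂ) = gmap A B := rfl

noncomputable def ymap (A B C : ℂ) : ℝ × ℝ →L[ℝ] ℝ :=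
  Complex.imCLM.comp ((ContinuousLinearMap.mul ℝ ℂ C).comp (gmap A B))

@[simp] lemma ymap_apply (A B C : ℂ) (p : ℝ × ℝ) : ymap A B C p = (C * gmap A B p).im := rfl

noncomputable def lamFst : ℝ →L[ℝ] ((ℝ × ℝ) →L[ℝ] ℝ) :=
  ContinuousLinearMap.smulRightL ℝ (ℝ × ℝ) ℝ (ContinuousLinearMap.fst ℝ ℝ ℝ)

noncomputable def lamSnd : ℝ →L[ℝ] ((ℝ × ℝ) →L[ℝ] ℝ) :=
  ContinuousLinearMap.smulRightL ℝ (ℝ × ℝ) ℝ (ContinuousLinearMap.snd ℝ ℝ ℝ)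

@[simp] lemma lamFst_apply (c : ℝ) (v : ℝ × ℝ) : lamFst c v = v.1 * c := by
  simp [lamFst, ContinuousLinearMap.smulRightL, smul_eq_mul]

@[simp] lemma lamSnd_apply (c : ℝ) (v : ℝ × ℝ) : lamSnd c v = v.2 * c := by
  simp [lamSnd, ContinuousLinearMap.smulRightL, smul_eq_mul]

noncomputable def hess (A B : ℂ) : (ℝ × ℝ) →L[ℝ] ((ℝ × ℝ) →L[ℝ] ℝ) :=
  lamFst.comp ((-Real.pi⁻¹) • ymap A B B) + lamSnd.comp (Real.pi⁻¹ • ymap A B A)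

lemma hess_apply (A B : ℂ) (u v : ℝ × ℝ) :
    hess A B u v = v.1 * (-Real.pi⁻¹ * (B * gmap A B u).im) +
      v.2 * (Real.pi⁻¹ * (A * gmap A B u).im) := by
  simp [hess, smul_eq_mul]
  ring

lemma hess_formula (A B : ℂ) (hB : B ≠ 0) (hd : A.im*B.re - A.re*B.im ≠ 0) (u v : ℝ × ℝ) :
    hess A B u v = (1 / (Real.pi * (A/B).im)) *
      (u.1 * v.1 - (A/B).re * (u.1 * v.2 + u.2 * v.1) + ‖A/B‖ ^ 2 * (u.2 * v.2)) := by
  have hπ : Real.pi ≠ 0 := Real.pi_ne_zero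
  have hB2 : B.re * B.re + B.im * B.im ≠ 0 := by
    have := Complex.normSq_pos.mpr hB
    rw [Complex.normSq_apply] at this; exact this.ne'
  rw [hess_apply]
  rw [Complex.sq_norm, Complex.normSq_div, Complex.div_im, Complex.div_re,
    Complex.normSq_apply, Complex.normSq_apply]
  simp only [Complex.mul_im, gmap_re, gmap_im]
  have hd' : B.re * A.im - A.re * B.im ≠ 0 := by contrapose! hd; linarith
  have hB2' : B.re ^ 2 + B.im ^ 2 ≠ 0 := by contrapose! hB2; nlinarith
  field_simp
  ring

lemma posdef (A B : ℂ) (hi : 0 < (A/B).im) (u : ℝ × ℝ) (hu : u ≠ 0) :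
    0 < (1 / (Real.pi * (A/B).im)) *
      (u.1 * u.1 - 2 * (A/B).re * (u.1 * u.2) + ‖A/B‖ ^ 2 * (u.2 * u.2)) := by
  have hπ : 0 < Real.pi := Real.pi_pos
  set r := (A/B).re
  set i := (A/B).im
  have hn : ‖A/B‖ ^ 2 = r * r + i * i := by
    rw [Complex.sq_norm, Complex.normSq_apply]
  have h1 : 0 < 1 / (Real.pi * i) := by positivity
  apply mul_pos h1
  rw [hn]
  rcases eq_or_ne u.2 0 with h | h
  · have h1 : u.1 ≠ 0 := by
      intro h1; exact hu (Prod.ext h1 h)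
    rw [h]
    have := mul_self_pos.mpr h1
    nlinarith
  · nlinarith [sq_nonneg (u.1 - r * u.2), mul_pos (mul_pos hi hi) (mul_self_pos.mpr h)]


/-- the Ronkin-type function `ρ` with gradient
`∇ρ = (−y₂/π, y₁/π)` in the amoeba coordinates `(x₁,x₂) = (Re ζ₁, Re ζ₂)` is twice
differentiable, its Hessian at `F(z)` is `(1/(π Im R))[[1, −Re R],[−Re R, |R|²]]` with
`R = ζ₁′/ζ₂′` evaluated at `z`; this matrix is positive definite, and hence `ρ` is
strictly convex on `V` whenever `V` is convex. -/
theorem ronkin_function_hessian_strictly_convex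
    (U : Set ℂ) (hU : IsOpen U) (V : Set (ℝ × ℝ)) (hV : IsOpen V)
    (ζ₁ ζ₂ ζ₁' ζ₂' : ℂ → ℂ)
    (h₁ : ∀ z ∈ U, HasDerivAt ζ₁ (ζ₁' z) z)
    (h₂ : ∀ z ∈ U, HasDerivAt ζ₂ (ζ₂' z) z)
    (hne : ∀ z ∈ U, ζ₂' z ≠ 0)
    (hR : ∀ z ∈ U, 0 < (ζ₁' z / ζ₂' z).im)
    (G : ℝ × ℝ → ℂ)
    (hFmem : ∀ z ∈ U, ((ζ₁ z).re, (ζ₂ z).re) ∈ V)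
    (hGmem : ∀ p ∈ V, G p ∈ U)
    (hGF : ∀ z ∈ U, G ((ζ₁ z).re, (ζ₂ z).re) = z)
    (hFG : ∀ p ∈ V, (((ζ₁ (G p)).re, (ζ₂ (G p)).re) : ℝ × ℝ) = p)
    (hGcont : ContinuousOn G V)
    (ρ : ℝ × ℝ → ℝ)
    (hρdiff : ∀ p ∈ V, DifferentiableAt ℝ ρ p)
    (hρx₁ : ∀ p ∈ V, fderiv ℝ ρ p (1, 0) = -(ζ₂ (G p)).im / Real.pi)
    (hρx₂ : ∀ p ∈ V, fderiv ℝ ρ p (0, 1) = (ζ₁ (G p)).im / Real.pi) :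
    (∀ z ∈ U,
      DifferentiableAt ℝ (fderiv ℝ ρ) ((ζ₁ z).re, (ζ₂ z).re) ∧
      (∀ u v : ℝ × ℝ,
        fderiv ℝ (fderiv ℝ ρ) ((ζ₁ z).re, (ζ₂ z).re) u v =
          (1 / (Real.pi * (ζ₁' z / ζ₂' z).im)) *
            (u.1 * v.1 - (ζ₁' z / ζ₂' z).re * (u.1 * v.2 + u.2 * v.1) +
              ‖ζ₁' z / ζ₂' z‖ ^ 2 * (u.2 * v.2))) ∧
      (∀ u : ℝ × ℝ, u ≠ 0 →
        0 < (1 / (Real.pi * (ζ₁' z / ζ₂' z).im)) *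
            (u.1 * u.1 - 2 * (ζ₁' z / ζ₂' z).re * (u.1 * u.2) +
              ‖ζ₁' z / ζ₂' z‖ ^ 2 * (u.2 * u.2)))) ∧
    (Convex ℝ V → StrictConvexOn ℝ V ρ) := by
  have hπ : (0:ℝ) < Real.pi := Real.pi_pos
  -- positivity of the Jacobian determinant
  have hdpos : ∀ z ∈ U, 0 < (ζ₁' z).im * (ζ₂' z).re - (ζ₁' z).re * (ζ₂' z).im := by
    intro z hz
    have h := hR z hz
    have hb : 0 < Complex.normSq (ζ₂' z) := Complex.normSq_pos.mpr (hne z hz)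
    rw [Complex.div_im, ← sub_div, div_pos_iff] at h
    rcases h with ⟨h, _⟩ | ⟨_, h⟩
    · exact h
    · exact absurd h (not_lt.mpr hb.le)
  -- derivative of F
  have hFd : ∀ z ∈ U, HasFDerivAt (fun w => (((ζ₁ w).re, (ζ₂ w).re) : ℝ × ℝ))
      (fmap (ζ₁' z) (ζ₂' z)) z := by
    intro z hz
    have H1 := Complex.reCLM.hasFDerivAt.comp z ((h₁ z hz).hasFDerivAt.restrictScalars ℝ)
    have H2 := Complex.reCLM.hasFDerivAt.comp z ((h₂ z hz).hasFDerivAt.restrictScalars ℝ)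
    refine (HasFDerivAt.prodMk H1 H2).congr_fderiv ?_
    ext w <;> simp [fmap, mul_comm]
  -- derivative of G
  have hGd : ∀ p ∈ V, HasFDerivAt G (gmap (ζ₁' (G p)) (ζ₂' (G p))) p := by
    intro p hp
    have hz := hGmem p hp
    have hd := (hdpos _ hz).ne'
    have H := HasFDerivAt.of_local_left_inverse (f' := fequiv _ _ hd)
      (hGcont.continuousAt (hV.mem_nhds hp))
      (by rw [fequiv_coe]; exact hFd _ hz)
      (by filter_upwards [hV.mem_nhds hp] with q hq; exact hFG q hq)
    rwa [fequiv_symm_coe] at H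
  -- derivatives of the y-coordinates
  have hY1 : ∀ p ∈ V, HasFDerivAt (fun q => (ζ₁ (G q)).im)
      (ymap (ζ₁' (G p)) (ζ₂' (G p)) (ζ₁' (G p))) p := by
    intro p hp
    have hz := hGmem p hp
    have h := Complex.imCLM.hasFDerivAt.comp p
      (((h₁ _ hz).hasFDerivAt.restrictScalars ℝ).comp p (hGd p hp))
    refine h.congr_fderiv ?_
    ext q <;> simp [ymap, mul_comm]
  have hY2 : ∀ p ∈ V, HasFDerivAt (fun q => (ζ₂ (G q)).im)
      (ymap (ζ₁' (G p)) (ζ₂' (G p)) (ζ₂' (G p))) p := by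
    intro p hp
    have hz := hGmem p hp
    have h := Complex.imCLM.hasFDerivAt.comp p
      (((h₂ _ hz).hasFDerivAt.restrictScalars ℝ).comp p (hGd p hp))
    refine h.congr_fderiv ?_
    ext q <;> simp [ymap, mul_comm]
  -- the explicit gradient function
  set Φ : (ℝ × ℝ) → ((ℝ × ℝ) →L[ℝ] ℝ) := fun p =>
    lamFst ((-Real.pi⁻¹) * (ζ₂ (G p)).im) + lamSnd (Real.pi⁻¹ * (ζ₁ (G p)).im) with hΦdef
  have hΦeq : Set.EqOn (fderiv ℝ ρ) Φ V := by
    intro p hp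
    apply ContinuousLinearMap.ext
    intro v
    have hv : (v : ℝ × ℝ) = v.1 • ((1,0) : ℝ × ℝ) + v.2 • ((0,1) : ℝ × ℝ) := by
      apply Prod.ext <;> simp
    conv_lhs => rw [hv]
    rw [map_add, map_smul, map_smul, hρx₁ p hp, hρx₂ p hp]
    simp [hΦdef, smul_eq_mul]
    ring
  have hΦd : ∀ p ∈ V, HasFDerivAt Φ (hess (ζ₁' (G p)) (ζ₂' (G p))) p := by
    intro p hp
    have H2 := lamFst.hasFDerivAt.comp p ((hY2 p hp).const_mul (-Real.pi⁻¹))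
    have H1 := lamSnd.hasFDerivAt.comp p ((hY1 p hp).const_mul Real.pi⁻¹)
    exact (H2.add H1).congr_fderiv rfl
  have key : ∀ p ∈ V, HasFDerivAt (fderiv ℝ ρ) (hess (ζ₁' (G p)) (ζ₂' (G p))) p := by
    intro p hp
    refine (hΦd p hp).congr_of_eventuallyEq ?_
    filter_upwards [hV.mem_nhds hp] with q hq
    exact hΦeq hq
  constructor
  · intro z hz
    have hp : ((ζ₁ z).re, (ζ₂ z).re) ∈ V := hFmem z hz
    have K := key _ hp
    rw [hGF z hz] at K
    refine ⟨K.differentiableAt, ?_, ?_⟩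
    · intro u v
      rw [K.fderiv]
      exact hess_formula _ _ (hne z hz) (hdpos z hz).ne' u v
    · intro u hu
      exact posdef _ _ (hR z hz) u hu
  · intro hconv
    refine ⟨hconv, ?_⟩
    intro x hx y hy hxy a b ha hb hab
    set u := y - x with hudef
    have hu : u ≠ 0 := sub_ne_zero_of_ne (Ne.symm hxy)
    set ℓ : ℝ → ℝ × ℝ := fun t => x + t • u with hℓdef
    have hℓcont : Continuous ℓ := by
      exact continuous_const.add (continuous_id.smul continuous_const)
    set S : Set ℝ := ℓ ⁻¹' V with hSdef
    have hS : IsOpen S := hV.preimage hℓcont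
    have hIcc : Set.Icc (0:ℝ) 1 ⊆ S := by
      intro t ht
      exact hconv.add_smul_sub_mem hx hy ht
    have hℓd : ∀ t : ℝ, HasDerivAt ℓ u t := by
      intro t
      have h := ((hasDerivAt_id t).smul_const u).const_add x; rwa [one_smul] at h
    have hg' : ∀ t ∈ S, HasDerivAt (fun s => ρ (ℓ s)) (fderiv ℝ ρ (ℓ t) u) t := by
      intro t ht
      exact (hρdiff _ ht).hasFDerivAt.comp_hasDerivAt t (hℓd t)
    have hg1' : ∀ t ∈ S, HasDerivAt (fun s => fderiv ℝ ρ (ℓ s) u)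
        (hess (ζ₁' (G (ℓ t))) (ζ₂' (G (ℓ t))) u u) t := by
      intro t ht
      have h := (key (ℓ t) ht).comp_hasDerivAt t (hℓd t)
      exact (ContinuousLinearMap.apply ℝ ℝ u).hasFDerivAt.comp_hasDerivAt t h
    have hcont : ContinuousOn (fun s => ρ (ℓ s)) (Set.Icc (0:ℝ) 1) := by
      intro t ht
      exact ((hg' t (hIcc ht)).continuousAt).continuousWithinAt
    have hpos : ∀ t ∈ interior (Set.Icc (0:ℝ) 1), 0 < (deriv^[2] (fun s => ρ (ℓ s))) t := by
      intro t ht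
      rw [interior_Icc] at ht
      have htS : t ∈ S := hIcc (Set.Ioo_subset_Icc_self ht)
      have hzU : G (ℓ t) ∈ U := hGmem _ htS
      show 0 < deriv (deriv (fun s => ρ (ℓ s))) t
      have e2 : deriv (deriv (fun s => ρ (ℓ s))) t = deriv (fun s => fderiv ℝ ρ (ℓ s) u) t := by
        apply Filter.EventuallyEq.deriv_eq
        filter_upwards [hS.mem_nhds htS] with s hs
        exact (hg' s hs).deriv
      rw [e2, (hg1' t htS).deriv]
      rw [hess_formula _ _ (hne _ hzU) (hdpos _ hzU).ne' u u]
      have hp := posdef (ζ₁' (G (ℓ t))) (ζ₂' (G (ℓ t))) (hR _ hzU) u hu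
      have heq : (u.1 * u.1 - (ζ₁' (G (ℓ t)) / ζ₂' (G (ℓ t))).re * (u.1 * u.2 + u.2 * u.1) +
          ‖ζ₁' (G (ℓ t)) / ζ₂' (G (ℓ t))‖ ^ 2 * (u.2 * u.2)) =
          (u.1 * u.1 - 2 * (ζ₁' (G (ℓ t)) / ζ₂' (G (ℓ t))).re * (u.1 * u.2) +
          ‖ζ₁' (G (ℓ t)) / ζ₂' (G (ℓ t))‖ ^ 2 * (u.2 * u.2)) := by ring
      rw [heq]
      exact hp
    have sc := strictConvexOn_of_deriv2_pos (convex_Icc 0 1) hcont hpos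
    have h01 : (0:ℝ) ∈ Set.Icc (0:ℝ) 1 := Set.left_mem_Icc.mpr zero_le_one
    have h11 : (1:ℝ) ∈ Set.Icc (0:ℝ) 1 := Set.right_mem_Icc.mpr zero_le_one
    have := sc.2 h01 h11 (by norm_num) ha hb hab
    simp only [smul_eq_mul, mul_zero, mul_one, zero_add] at this
    have e0 : ℓ b = a • x + b • y := by
      have ha' : a = 1 - b := by linarith
      simp only [hℓdef, hudef, ha']
      module
    have eg0 : ℓ 0 = x := by simp [hℓdef]
    have eg1 : ℓ 1 = y := by simp [hℓdef, hudef]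
    rw [eg0, eg1, e0] at this
    simpa only [smul_eq_mul] using this
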